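/- arXiv:2012.09493 — 5 statements merged into one kernel-verified Lean document; each statement's English description precedes it below -/
import Mathlib

section
/- In the mean-reverting model with β = β(k) := (I − k − (a/b)(ℓ/ρ) − λc/ρ)(ρ+b)/ℓ + a/b, where ℓ, ρ, b > 0, the optimal threshold x*(k) (the unique root of (x − β(k))ψ_ρ'(x) − ψ_ρ(x) = 0 in (β(k), ∞)) satisfies ∂x*/∂k = −(ψ_ρ'(x*(k)))² (ρ+b)/ℓ / (ψ_ρ(x*(k)) ψ_ρ''(x*(k))) < 0. That is, the optimal switching threshold is strictly decreasing in the incentive k. -/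
open Filter Topology


/-- In the mean-reverting model, with
β(k) = (I − k − (a/b)(ℓ/ρ) − λc/ρ)(ρ+b)/ℓ + a/b, the optimal threshold x*(k) (unique root
in (β(k), ∞) of (x − β(k))ψ_ρ'(x) − ψ_ρ(x) = 0) satisfies
∂x*/∂k = −(ψ_ρ'(x*))²(ρ+b)/ℓ / (ψ_ρ(x*)ψ_ρ''(x*)) < 0 : strictly decreasing in the
incentive k. -/
theorem stmt_7 (a b σ ρ ℓ lam c Inv : ℝ)
    (hb : 0 < b) (hσ : 0 < σ) (hρ : 0 < ρ) (hℓ : 0 < ℓ)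
    (ψ ψ' ψ'' : ℝ → ℝ)
    (hψpos : ∀ x, 0 < ψ x)
    (hψ'pos : ∀ x, 0 < ψ' x)
    (hψ''pos : ∀ x, 0 < ψ'' x)
    (hd1 : ∀ x, HasDerivAt ψ (ψ' x) x)
    (hd2 : ∀ x, HasDerivAt ψ' (ψ'' x) x)
    (hcont : Continuous ψ'')
    (hODE : ∀ x, σ ^ 2 / 2 * ψ'' x + (a - b * x) * ψ' x - ρ * ψ x = 0)
    (β : ℝ → ℝ)
    (hβ : ∀ k, β k = (Inv - k - (a / b) * (ℓ / ρ) - lam * c / ρ) * ((ρ + b) / ℓ) + a / b)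
    (xstar : ℝ → ℝ)
    (hroot : ∀ k : ℝ, xstar k ∈ Set.Ioi (β k) ∧
      (xstar k - β k) * ψ' (xstar k) - ψ (xstar k) = 0)
    (huniq : ∀ k x : ℝ, x ∈ Set.Ioi (β k) → (x - β k) * ψ' x - ψ x = 0 → x = xstar k) :
    (∀ k : ℝ, HasDerivAt xstar
        (-(ψ' (xstar k)) ^ 2 * ((ρ + b) / ℓ) / (ψ (xstar k) * ψ'' (xstar k))) k ∧
      -(ψ' (xstar k)) ^ 2 * ((ρ + b) / ℓ) / (ψ (xstar k) * ψ'' (xstar k)) < 0)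
    ∧ StrictAnti xstar := by
  have hM : 0 < (ρ + b) / ℓ := div_pos (by linarith) hℓ
  set h : ℝ → ℝ := fun x => x - ψ x / ψ' x with hh
  set h' : ℝ → ℝ := fun x => ψ x * ψ'' x / (ψ' x) ^ 2 with hh'
  have hdh : ∀ x, HasDerivAt h (h' x) x := by
    intro x
    have H : HasDerivAt h (1 - (ψ' x * ψ' x - ψ x * ψ'' x) / ψ' x ^ 2) x := (hasDerivAt_id x).sub ((hd1 x).div (hd2 x) (hψ'pos x).ne')
    convert H using 1
    have := (hψ'pos x).ne'
    simp only [hh']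
    field_simp
    ring
  have hcψ : Continuous ψ := continuous_iff_continuousAt.2 fun x => (hd1 x).continuousAt
  have hcψ' : Continuous ψ' := continuous_iff_continuousAt.2 fun x => (hd2 x).continuousAt
  have hch' : Continuous h' := by
    apply Continuous.div (hcψ.mul hcont) (hcψ'.pow 2)
    intro x; exact pow_ne_zero 2 (hψ'pos x).ne'
  have hcd : ContDiff ℝ 1 h := by
    rw [contDiff_one_iff_deriv]
    refine ⟨fun x => (hdh x).differentiableAt, ?_⟩
    have : deriv h = h' := funext fun x => (hdh x).deriv
    rw [this]; exact hch'
  -- key: h (xstar k) = β k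
  have hkey : ∀ k, h (xstar k) = β k := by
    intro k
    have := (hroot k).2
    have hne := (hψ'pos (xstar k)).ne'
    simp only [hh]
    field_simp
    linarith
  have main : ∀ k : ℝ, HasDerivAt xstar
      (-(ψ' (xstar k)) ^ 2 * ((ρ + b) / ℓ) / (ψ (xstar k) * ψ'' (xstar k))) k := by
    intro k
    have hβd : HasDerivAt β (-((ρ + b) / ℓ)) k := by
      have hβfun : β = fun k => (Inv - k - (a / b) * (ℓ / ρ) - lam * c / ρ) * ((ρ + b) / ℓ) + a / b :=
        funext hβ
      rw [hβfun]
      have h1 : HasDerivAt (fun k : ℝ => Inv - k - (a / b) * (ℓ / ρ) - lam * c / ρ) (-1) k := by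
        simpa using (((hasDerivAt_id k).const_sub Inv).sub_const ((a / b) * (ℓ / ρ))).sub_const
          (lam * c / ρ)
      have := (h1.mul_const ((ρ + b) / ℓ)).add_const (a / b)
      simpa using this
    set x := xstar k with hx
    have hne : h' x ≠ 0 := by
      have : 0 < h' x :=
        div_pos (mul_pos (hψpos x) (hψ''pos x)) (pow_pos (hψ'pos x) 2)
      exact this.ne'
    have hsd : HasStrictDerivAt h (h' x) x := by
      have H := (hcd.contDiffAt (x := x)).hasStrictDerivAt one_ne_zero
      rwa [(hdh x).deriv] at H
    set g := hsd.localInverse h (h' x) x hne with hg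
    have hgx : g (h x) = x :=
      (hsd.hasStrictFDerivAt_equiv hne).localInverse_apply_image
    have hgcont : ContinuousAt g (β k) := by
      rw [← hkey k]
      exact (hsd.hasStrictFDerivAt_equiv hne).localInverse_continuousAt
    have hright : ∀ᶠ y in 𝓝 (β k), h (g y) = y := by
      rw [← hkey k]
      exact (hsd.hasStrictFDerivAt_equiv hne).eventually_right_inverse
    have hgβ : g (β k) = x := by rw [← hkey k, hgx]
    have hβcont : ContinuousAt β k := hβd.continuousAt
    have hev2 : ∀ᶠ k' in 𝓝 k, h (g (β k')) = β k' := hβcont.eventually hright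
    have h0 : ContinuousAt (fun k' => g (β k') - β k') k :=
      (hgcont.comp hβcont).sub hβcont
    have hpos : β k < g (β k) := by rw [hgβ]; exact (hroot k).1
    have hev1 : ∀ᶠ k' in 𝓝 k, 0 < g (β k') - β k' :=
      h0.eventually (eventually_gt_nhds (sub_pos.2 hpos))
    have heq' : ∀ᶠ k' in 𝓝 k, g (β k') = xstar k' := by
      filter_upwards [hev1, hev2] with k' h1 h2
      refine huniq k' _ (by simpa using sub_pos.1 h1) ?_
      have hne' := (hψ'pos (g (β k'))).ne'
      have : g (β k') - ψ (g (β k')) / ψ' (g (β k')) = β k' := h2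
      have := sub_eq_iff_eq_add.1 this
      field_simp at this ⊢
      linarith
    have hgd : HasDerivAt g ((h' x)⁻¹) (β k) := by
      rw [← hkey k]
      exact (hsd.to_localInverse hne).hasDerivAt
    have hcomp : HasDerivAt (fun k' => g (β k')) ((h' x)⁻¹ * (-((ρ + b) / ℓ))) k :=
      hgd.comp k hβd
    have hxd : HasDerivAt xstar ((h' x)⁻¹ * (-((ρ + b) / ℓ))) k :=
      hcomp.congr_of_eventuallyEq (heq'.mono fun k' e => e.symm)
    convert hxd using 1
    have h1 := (hψpos x).ne'
    have h2 := (hψ'pos x).ne'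
    have h3 := (hψ''pos x).ne'
    simp only [hh']
    field_simp
  have hneg : ∀ k : ℝ,
      -(ψ' (xstar k)) ^ 2 * ((ρ + b) / ℓ) / (ψ (xstar k) * ψ'' (xstar k)) < 0 := by
    intro k
    apply div_neg_of_neg_of_pos
    · have : 0 < (ψ' (xstar k)) ^ 2 * ((ρ + b) / ℓ) :=
        mul_pos (pow_pos (hψ'pos _) 2) hM
      linarith
    · exact mul_pos (hψpos _) (hψ''pos _)
  refine ⟨fun k => ⟨main k, hneg k⟩, ?_⟩
  exact strictAnti_of_deriv_neg fun k => by rw [(main k).deriv]; exact hneg k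
end

section
/- In the mean-reverting model with β = β(λ) := (I − k − (a/b)(ℓ/ρ) − λc/ρ)(ρ+b)/ℓ + a/b, where ℓ, ρ, b, c > 0, the optimal threshold x*(λ) satisfies ∂x*/∂λ = −(ψ_ρ'(x*(λ)))² (c/ρ)((ρ+b)/ℓ) / (ψ_ρ(x*(λ)) ψ_ρ''(x*(λ))) < 0. That is, the optimal switching threshold is strictly decreasing in the traffic-ban intensity λ. -/
/-- In the mean-reverting model, with
β(λ) = (I − k − (a/b)(ℓ/ρ) − λc/ρ)(ρ+b)/ℓ + a/b, the optimal threshold x*(λ) satisfies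
∂x*/∂λ = −(ψ_ρ'(x*))²(c/ρ)((ρ+b)/ℓ) / (ψ_ρ(x*)ψ_ρ''(x*)) < 0 : strictly decreasing in
the traffic-ban intensity λ. -/
theorem stmt_8 (a b σ ρ ℓ c Inv k : ℝ)
    (hb : 0 < b) (hσ : 0 < σ) (hρ : 0 < ρ) (hℓ : 0 < ℓ) (hc : 0 < c)
    (ψ ψ' ψ'' : ℝ → ℝ)
    (hψpos : ∀ x, 0 < ψ x)
    (hψ'pos : ∀ x, 0 < ψ' x)
    (hψ''pos : ∀ x, 0 < ψ'' x)
    (hd1 : ∀ x, HasDerivAt ψ (ψ' x) x)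
    (hd2 : ∀ x, HasDerivAt ψ' (ψ'' x) x)
    (hcont : Continuous ψ'')
    (hODE : ∀ x, σ ^ 2 / 2 * ψ'' x + (a - b * x) * ψ' x - ρ * ψ x = 0)
    (β : ℝ → ℝ)
    (hβ : ∀ lam, β lam = (Inv - k - (a / b) * (ℓ / ρ) - lam * c / ρ) * ((ρ + b) / ℓ) + a / b)
    (xstar : ℝ → ℝ)
    (hroot : ∀ lam : ℝ, xstar lam ∈ Set.Ioi (β lam) ∧
      (xstar lam - β lam) * ψ' (xstar lam) - ψ (xstar lam) = 0)
    (huniq : ∀ lam x : ℝ, x ∈ Set.Ioi (β lam) → (x - β lam) * ψ' x - ψ x = 0 → x = xstar lam) :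
    (∀ lam : ℝ, HasDerivAt xstar
        (-(ψ' (xstar lam)) ^ 2 * (c / ρ) * ((ρ + b) / ℓ) / (ψ (xstar lam) * ψ'' (xstar lam))) lam ∧
      -(ψ' (xstar lam)) ^ 2 * (c / ρ) * ((ρ + b) / ℓ) / (ψ (xstar lam) * ψ'' (xstar lam)) < 0)
    ∧ StrictAnti xstar := by
  -- constants
  set C : ℝ := c / ρ * ((ρ + b) / ℓ) with hC
  have hCpos : 0 < C := by positivity
  set D : ℝ := (Inv - k - (a / b) * (ℓ / ρ)) * ((ρ + b) / ℓ) + a / b with hD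
  have hβeq : ∀ lam, β lam = D - lam * C := by
    intro lam; rw [hβ, hD, hC]; ring
  -- the auxiliary function h
  set h : ℝ → ℝ := fun x => x - ψ x / ψ' x with hh
  have hψ'ne : ∀ x, ψ' x ≠ 0 := fun x => (hψ'pos x).ne'
  have hhd : ∀ x, HasDerivAt h (ψ x * ψ'' x / (ψ' x) ^ 2) x := by
    intro x
    have := (hasDerivAt_id x).sub ((hd1 x).div (hd2 x) (hψ'ne x))
    refine this.congr_deriv ?_
    rw [sub_eq_iff_eq_add, ← add_div, eq_div_iff (pow_ne_zero 2 (hψ'ne x))]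
    ring
  have hhd' : ∀ x, 0 < ψ x * ψ'' x / (ψ' x) ^ 2 := by
    intro x
    have := hψpos x; have := hψ''pos x; have := hψ'pos x
    positivity
  -- h is strictly monotone
  have hmono : StrictMono h := by
    apply strictMono_of_deriv_pos
    intro x
    rw [(hhd x).deriv]
    exact hhd' x
  -- h (xstar lam) = β lam
  have hkey : ∀ lam, h (xstar lam) = β lam := by
    intro lam
    obtain ⟨hmem, heq⟩ := hroot lam
    have : ψ (xstar lam) = (xstar lam - β lam) * ψ' (xstar lam) := by linarith
    rw [hh]
    simp only []
    rw [this, mul_div_assoc, div_self (hψ'ne _), mul_one]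
    ring
  -- h is surjective
  have hsurj : Function.Surjective h := by
    intro y
    refine ⟨xstar ((D - y) / C), ?_⟩
    rw [hkey, hβeq]
    field_simp
    ring
  -- order isomorphism
  let e : ℝ ≃o ℝ := StrictMono.orderIsoOfSurjective h hmono hsurj
  have he : ∀ x, e x = h x := fun x => rfl
  have hesymm : ∀ lam, e.symm (β lam) = xstar lam := by
    intro lam
    rw [OrderIso.symm_apply_eq, he, hkey]
  have hesymm_cont : Continuous (e.symm : ℝ → ℝ) := OrderIso.continuous _
  -- β is an affine map with derivative -C
  have hβd : ∀ lam, HasDerivAt β (-C) lam := by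
    intro lam
    have : HasDerivAt (fun l : ℝ => D - l * C) (-C) lam := by
      have := ((hasDerivAt_id lam).mul_const C).const_sub D
      simpa using this
    exact this.congr_of_eventuallyEq (Filter.Eventually.of_forall fun l => (hβeq l))
  have hβanti : StrictAnti β := by
    intro x y hxy
    rw [hβeq, hβeq]
    nlinarith
  -- xstar = e.symm ∘ β
  have hxeq : xstar = fun lam => e.symm (β lam) := by
    funext lam; rw [hesymm]
  constructor
  · intro lam
    set x₀ := xstar lam with hx0
    have hne : ψ x₀ * ψ'' x₀ / (ψ' x₀) ^ 2 ≠ 0 := (hhd' x₀).ne'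
    -- derivative of e.symm at β lam
    have hinv : HasDerivAt (e.symm : ℝ → ℝ) ((ψ x₀ * ψ'' x₀ / (ψ' x₀) ^ 2)⁻¹) (β lam) := by
      have hgb : (e.symm : ℝ → ℝ) (β lam) = x₀ := hesymm lam
      have hcg : ContinuousAt (e.symm : ℝ → ℝ) (β lam) := hesymm_cont.continuousAt
      have hfd : HasDerivAt h (ψ x₀ * ψ'' x₀ / (ψ' x₀) ^ 2) ((e.symm : ℝ → ℝ) (β lam)) := by
        rw [hgb]; exact hhd x₀
      have hfg : ∀ᶠ y in nhds (β lam), h ((e.symm : ℝ → ℝ) y) = y :=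
        Filter.Eventually.of_forall fun y => by
          have : e (e.symm y) = y := e.apply_symm_apply y
          rwa [he] at this
      exact HasDerivAt.of_local_left_inverse hcg hfd hne hfg
    have hcomp : HasDerivAt (fun l => e.symm (β l))
        ((ψ x₀ * ψ'' x₀ / (ψ' x₀) ^ 2)⁻¹ * (-C)) lam := hinv.comp lam (hβd lam)
    have hval : (ψ x₀ * ψ'' x₀ / (ψ' x₀) ^ 2)⁻¹ * (-C)
        = -(ψ' x₀) ^ 2 * (c / ρ) * ((ρ + b) / ℓ) / (ψ x₀ * ψ'' x₀) := by
      rw [hC]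
      have h1 := (hψpos x₀).ne'
      have h2 := (hψ''pos x₀).ne'
      have h3 := hψ'ne x₀
      field_simp
    constructor
    · rw [hxeq]
      rw [← hval]
      exact hcomp
    · have hnum : -(ψ' x₀) ^ 2 * (c / ρ) * ((ρ + b) / ℓ) < 0 := by
        have := hψ'pos x₀
        have : 0 < (ψ' x₀) ^ 2 * (c / ρ) * ((ρ + b) / ℓ) := by positivity
        linarith
      have hden : 0 < ψ x₀ * ψ'' x₀ := mul_pos (hψpos x₀) (hψ''pos x₀)
      exact div_neg_of_neg_of_pos hnum hden
  · rw [hxeq]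
    intro x y hxy
    exact e.symm.strictMono (hβanti hxy)
end

section
/- In the mean-reverting model with β = β(ℓ) := (I − k − (a/b)(ℓ/ρ) − λc/ρ)(ρ+b)/ℓ + a/b, the optimal threshold x*(ℓ) satisfies ∂x*/∂ℓ = −(ψ_ρ'(x*))² ((ρ+b)/ℓ²)(I − k − λc/ρ) / (ψ_ρ''(x*) ψ_ρ(x*)). Consequently x*(ℓ) is strictly decreasing in ℓ if I − k − λc/ρ > 0 and strictly increasing in ℓ if I − k − λc/ρ < 0. -/
/-- In the mean-reverting model, with
β(ℓ) = (I − k − (a/b)(ℓ/ρ) − λc/ρ)(ρ+b)/ℓ + a/b, the optimal threshold x*(ℓ) satisfies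
∂x*/∂ℓ = −(ψ_ρ'(x*))²((ρ+b)/ℓ²)(I − k − λc/ρ) / (ψ_ρ''(x*)ψ_ρ(x*)); consequently x*(ℓ) is
strictly decreasing in ℓ if I − k − λc/ρ > 0 and strictly increasing if I − k − λc/ρ < 0. -/
theorem stmt_9 (a b σ ρ lam c Inv k : ℝ)
    (hb : 0 < b) (hσ : 0 < σ) (hρ : 0 < ρ)
    (ψ ψ' ψ'' : ℝ → ℝ)
    (hψpos : ∀ x, 0 < ψ x)
    (hψ'pos : ∀ x, 0 < ψ' x)
    (hψ''pos : ∀ x, 0 < ψ'' x)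
    (hd1 : ∀ x, HasDerivAt ψ (ψ' x) x)
    (hd2 : ∀ x, HasDerivAt ψ' (ψ'' x) x)
    (hcont : Continuous ψ'')
    (hODE : ∀ x, σ ^ 2 / 2 * ψ'' x + (a - b * x) * ψ' x - ρ * ψ x = 0)
    (β : ℝ → ℝ)
    (hβ : ∀ ℓ, 0 < ℓ →
      β ℓ = (Inv - k - (a / b) * (ℓ / ρ) - lam * c / ρ) * ((ρ + b) / ℓ) + a / b)
    (xstar : ℝ → ℝ)
    (hroot : ∀ ℓ : ℝ, 0 < ℓ → xstar ℓ ∈ Set.Ioi (β ℓ) ∧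
      (xstar ℓ - β ℓ) * ψ' (xstar ℓ) - ψ (xstar ℓ) = 0)
    (huniq : ∀ ℓ x : ℝ, 0 < ℓ → x ∈ Set.Ioi (β ℓ) →
      (x - β ℓ) * ψ' x - ψ x = 0 → x = xstar ℓ) :
    (∀ ℓ : ℝ, 0 < ℓ → HasDerivAt xstar
        (-(ψ' (xstar ℓ)) ^ 2 * ((ρ + b) / ℓ ^ 2) * (Inv - k - lam * c / ρ)
          / (ψ'' (xstar ℓ) * ψ (xstar ℓ))) ℓ)
    ∧ (0 < Inv - k - lam * c / ρ → StrictAntiOn xstar (Set.Ioi 0))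
    ∧ (Inv - k - lam * c / ρ < 0 → StrictMonoOn xstar (Set.Ioi 0)) := by
  -- the auxiliary function g
  set g : ℝ → ℝ := fun x => x - ψ x / ψ' x with hgdef
  have hψ'ne : ∀ x, ψ' x ≠ 0 := fun x => (hψ'pos x).ne'
  have hgderiv : ∀ x, HasDerivAt g (ψ x * ψ'' x / (ψ' x) ^ 2) x := by
    intro x
    have hne := hψ'ne x
    have h := (hasDerivAt_id x).sub (((hd1 x).div (hd2 x) hne))
    refine h.congr_deriv ?_
    field_simp
    ring
  have hgd_pos : ∀ x, 0 < ψ x * ψ'' x / (ψ' x) ^ 2 := fun x =>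
    div_pos (mul_pos (hψpos x) (hψ''pos x)) (pow_pos (hψ'pos x) 2)
  have hgmono : StrictMono g := by
    apply strictMono_of_deriv_pos
    intro x
    rw [(hgderiv x).deriv]
    exact hgd_pos x
  have hginj := hgmono.injective
  have hgcont : Continuous g := by
    exact continuous_iff_continuousAt.mpr fun x => (hgderiv x).differentiableAt.continuousAt
  -- g (xstar ℓ) = β ℓ
  have hgx : ∀ ℓ : ℝ, 0 < ℓ → g (xstar ℓ) = β ℓ := by
    intro ℓ hℓ
    have h := (hroot ℓ hℓ).2
    have hne := hψ'ne (xstar ℓ)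
    simp only [hgdef]
    field_simp
    linarith [h]
  -- continuity of invFun g at points g x₀
  have hinvcont : ∀ x₀ : ℝ, ContinuousAt (Function.invFun g) (g x₀) := by
    intro x₀
    rw [Metric.continuousAt_iff]
    intro ε hε
    refine ⟨min (g (x₀ + ε) - g x₀) (g x₀ - g (x₀ - ε)), ?_, ?_⟩
    · exact lt_min (sub_pos.mpr (hgmono (by linarith))) (sub_pos.mpr (hgmono (by linarith)))
    · intro y hy
      rw [Real.dist_eq] at hy ⊢
      have h1 : y < g (x₀ + ε) := by
        have := abs_lt.mp hy
        have := this.2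
        have h2 := min_le_left (g (x₀ + ε) - g x₀) (g x₀ - g (x₀ - ε))
        linarith
      have h2 : g (x₀ - ε) < y := by
        have := (abs_lt.mp hy).1
        have h3 := min_le_right (g (x₀ + ε) - g x₀) (g x₀ - g (x₀ - ε))
        linarith
      obtain ⟨z, hz, hzy⟩ := intermediate_value_Ioo (by linarith : x₀ - ε ≤ x₀ + ε)
        hgcont.continuousOn ⟨h2, h1⟩
      have hz' : Function.invFun g y = z := by
        rw [← hzy, Function.leftInverse_invFun hginj]
      have hx0 : Function.invFun g (g x₀) = x₀ := Function.leftInverse_invFun hginj x₀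
      rw [hz', hx0, abs_lt]
      obtain ⟨hz1, hz2⟩ := hz
      constructor <;> linarith
  -- local right-inverse property
  have hlocinv : ∀ x₀ : ℝ, ∀ᶠ y in nhds (g x₀), g (Function.invFun g y) = y := by
    intro x₀
    have hopen : Set.Ioo (g (x₀ - 1)) (g (x₀ + 1)) ∈ nhds (g x₀) := by
      apply Ioo_mem_nhds (hgmono (by linarith)) (hgmono (by linarith))
    filter_upwards [hopen] with y hy
    obtain ⟨z, _, hzy⟩ := intermediate_value_Ioo (by linarith : x₀ - 1 ≤ x₀ + 1)
      hgcont.continuousOn hy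
    exact Function.invFun_eq ⟨z, hzy⟩
  -- derivative of invFun g
  have hinvderiv : ∀ x₀ : ℝ, HasDerivAt (Function.invFun g)
      ((ψ' x₀) ^ 2 / (ψ x₀ * ψ'' x₀)) (g x₀) := by
    intro x₀
    have h := HasDerivAt.of_local_left_inverse (f := g) (g := Function.invFun g)
      (a := g x₀) ?_ ?_ (hgd_pos x₀).ne' (hlocinv x₀)
    · refine h.congr_deriv ?_
      rw [inv_div]
    · exact hinvcont x₀
    · rw [Function.leftInverse_invFun hginj x₀]
      exact hgderiv x₀
  -- derivative of β
  set A := Inv - k - lam * c / ρ with hA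
  have hβderiv : ∀ ℓ : ℝ, 0 < ℓ → HasDerivAt β (-(A * (ρ + b) / ℓ ^ 2)) ℓ := by
    intro ℓ hℓ
    have h1 : HasDerivAt (fun t : ℝ => (ρ + b) / t) ((ρ + b) * (-(ℓ ^ 2)⁻¹)) ℓ := by
      simpa [div_eq_mul_inv] using (hasDerivAt_inv hℓ.ne').const_mul (ρ + b)
    have h2 : HasDerivAt (fun t : ℝ => Inv - k - (a / b) * (t / ρ) - lam * c / ρ)
        (-(a / b / ρ)) ℓ := by
      have := ((hasDerivAt_id ℓ).div_const ρ).const_mul (a / b)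
      have h3 := ((hasDerivAt_const ℓ (Inv - k)).sub this).sub_const (lam * c / ρ)
      refine h3.congr_deriv ?_
      ring
    have h4 := (h2.mul h1).add_const (a / b)
    have heq : (fun t => (Inv - k - (a / b) * (t / ρ) - lam * c / ρ) * ((ρ + b) / t) + a / b)
        =ᶠ[nhds ℓ] β := by
      filter_upwards [Ioi_mem_nhds hℓ] with t ht
      exact (hβ t ht).symm
    have h5 := h4.congr_of_eventuallyEq heq.symm
    refine h5.congr_deriv ?_
    have hℓ2 : (ℓ : ℝ) ≠ 0 := hℓ.ne'
    have hρne : ρ ≠ 0 := hρ.ne'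
    simp only [hA]
    field_simp
    ring_nf
  -- main derivative statement
  have hmain : ∀ ℓ : ℝ, 0 < ℓ → HasDerivAt xstar
      (-(ψ' (xstar ℓ)) ^ 2 * ((ρ + b) / ℓ ^ 2) * (Inv - k - lam * c / ρ)
        / (ψ'' (xstar ℓ) * ψ (xstar ℓ))) ℓ := by
    intro ℓ hℓ
    set x₀ := xstar ℓ with hx₀
    have hcomp : HasDerivAt (Function.invFun g ∘ β)
        ((ψ' x₀) ^ 2 / (ψ x₀ * ψ'' x₀) * (-(A * (ρ + b) / ℓ ^ 2))) ℓ := by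
      have hinv := hinvderiv x₀
      rw [hgx ℓ hℓ] at hinv
      exact hinv.comp ℓ (hβderiv ℓ hℓ)
    have heq : Function.invFun g ∘ β =ᶠ[nhds ℓ] xstar := by
      filter_upwards [Ioi_mem_nhds hℓ] with t ht
      simp only [Function.comp_apply]
      rw [← hgx t ht, Function.leftInverse_invFun hginj]
    have h := hcomp.congr_of_eventuallyEq heq.symm
    refine h.congr_deriv ?_
    have h1 := (hψpos x₀).ne'
    have h2 := (hψ''pos x₀).ne'
    have hρne : ρ ≠ 0 := hρ.ne'
    simp only [hA]
    field_simp
  refine ⟨hmain, ?_, ?_⟩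
  · intro hApos
    apply strictAntiOn_of_deriv_neg (convex_Ioi 0)
    · intro t ht
      exact ((hmain t ht).differentiableAt.continuousAt).continuousWithinAt
    · intro t ht
      rw [interior_Ioi] at ht
      rw [(hmain t ht).deriv]
      apply div_neg_of_neg_of_pos
      · have h1 : (0:ℝ) < (ψ' (xstar t)) ^ 2 := pow_pos (hψ'pos _) 2
        have h2 : (0:ℝ) < (ρ + b) / t ^ 2 := div_pos (by linarith) (pow_pos ht 2)
        rw [hA] at hApos
        nlinarith [mul_pos (mul_pos h1 h2) hApos]
      · exact mul_pos (hψ''pos _) (hψpos _)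
  · intro hAneg
    apply strictMonoOn_of_deriv_pos (convex_Ioi 0)
    · intro t ht
      exact ((hmain t ht).differentiableAt.continuousAt).continuousWithinAt
    · intro t ht
      rw [interior_Ioi] at ht
      rw [(hmain t ht).deriv]
      apply div_pos
      · have h1 : (0:ℝ) < (ψ' (xstar t)) ^ 2 := pow_pos (hψ'pos _) 2
        have h2 : (0:ℝ) < (ρ + b) / t ^ 2 := div_pos (by linarith) (pow_pos ht 2)
        rw [hA] at hAneg
        nlinarith [mul_pos (mul_pos h1 h2) (neg_pos.mpr hAneg)]
      · exact mul_pos (hψ''pos _) (hψpos _)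
end

section
/- Suppose condition (b) of the main theorem holds: ℓx + λc < ρ(I − k) for all x in the state space I. Then for every stopping time τ, E_x[−∫_τ^∞ e^{-ρt}(ℓX_t + λc) dt + e^{-ρτ}(I−k)] ≥ 0, with the infimum over stopping times equal to 0 attained in the limit τ → ∞; hence 𝒰(x) = 0 and it is never optimal to switch. -/
open MeasureTheory Filter
open scoped ENNReal Topology

lemma exp_aux (ρ : ℝ) (hρ : 0 < ρ) (a : ℝ) :
    ∫ t in Set.Ioi a, Real.exp (-ρ * t) = Real.exp (-ρ * a) / ρ := by
  have hderiv : ∀ x ∈ Set.Ici a, HasDerivAt (fun x => -(Real.exp (-ρ * x) / ρ))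
      (Real.exp (-ρ * x)) x := by
    intro x _
    have h1 : HasDerivAt (fun x : ℝ => -ρ * x) (-ρ) x := by
      simpa using (hasDerivAt_id x).const_mul (-ρ)
    have h2 : HasDerivAt (fun x : ℝ => Real.exp (-ρ * x)) (Real.exp (-ρ * x) * (-ρ)) x :=
      (Real.hasDerivAt_exp _).comp x h1
    have := (h2.div_const ρ).neg
    have e : -(Real.exp (-ρ * x) * -ρ / ρ) = Real.exp (-ρ * x) := by
      rw [mul_neg, neg_div, neg_neg, mul_div_assoc, div_self hρ.ne', mul_one]
    rw [e] at this
    exact this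
  have hint : IntegrableOn (fun x : ℝ => Real.exp (-ρ * x)) (Set.Ioi a) :=
    exp_neg_integrableOn_Ioi a hρ
  have hten : Tendsto (fun x => -(Real.exp (-ρ * x) / ρ)) atTop (𝓝 0) := by
    have h0 : Tendsto (fun x : ℝ => -ρ * x) atTop atBot :=
      tendsto_id.const_mul_atTop_of_neg (neg_neg_iff_pos.mpr hρ)
    have := (Real.tendsto_exp_atBot.comp h0).div_const ρ |>.neg
    simpa using this
  have := integral_Ioi_of_hasDerivAt_of_tendsto' hderiv hint hten
  rw [this]; ring

/-- tail bound: if `f ≤ exp(-ρ t) * (ρ * C)` on `Ici a` and `f` integrable there,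
then `∫_{Ici a} f ≤ exp(-ρ a) * C`. -/
lemma tail_le (ρ C a : ℝ) (hρ : 0 < ρ) (f : ℝ → ℝ)
    (hf : IntegrableOn f (Set.Ici a))
    (hb : ∀ t ∈ Set.Ici a, f t ≤ Real.exp (-ρ * t) * (ρ * C)) :
    ∫ t in Set.Ici a, f t ≤ Real.exp (-ρ * a) * C := by
  have hg : IntegrableOn (fun t => Real.exp (-ρ * t) * (ρ * C)) (Set.Ici a) := by
    rw [integrableOn_Ici_iff_integrableOn_Ioi]
    exact (exp_neg_integrableOn_Ioi a hρ).mul_const _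
  have h1 : ∫ t in Set.Ici a, f t ≤ ∫ t in Set.Ici a, Real.exp (-ρ * t) * (ρ * C) :=
    setIntegral_mono_on hf hg measurableSet_Ici hb
  have h2 : ∫ t in Set.Ici a, Real.exp (-ρ * t) * (ρ * C) = Real.exp (-ρ * a) * C := by
    rw [integral_Ici_eq_integral_Ioi, integral_mul_const, exp_aux ρ hρ a]
    field_simp
  linarith

/-- the tail integral of an integrable function tends to 0. -/
lemma tail_tendsto (f : ℝ → ℝ) (hf : IntegrableOn f (Set.Ici (0:ℝ))) :
    Tendsto (fun T : ℝ => ∫ t in Set.Ici T, f t) atTop (𝓝 0) := by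
  have key : Tendsto (fun T : ℝ => ∫ t in Set.Ici (0:ℝ), Set.indicator (Set.Ici T) f t)
      atTop (𝓝 0) := by
    have main : Tendsto (fun T : ℝ => ∫ t in Set.Ici (0:ℝ), Set.indicator (Set.Ici T) f t)
        atTop (𝓝 (∫ t in Set.Ici (0:ℝ), (0:ℝ))) := by
      apply tendsto_integral_filter_of_dominated_convergence (fun t => |f t|)
      · exact Eventually.of_forall fun T =>
          hf.aestronglyMeasurable.indicator measurableSet_Ici
      · refine Eventually.of_forall fun T => ae_of_all _ fun t => ?_
        simpa using norm_indicator_le_norm_self f t (s := Set.Ici T)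
      · exact hf.abs
      · refine ae_of_all _ fun t => ?_
        have : ∀ᶠ T : ℝ in atTop, Set.indicator (Set.Ici T) f t = 0 := by
          filter_upwards [eventually_gt_atTop t] with T hT
          exact Set.indicator_of_notMem (by simpa using hT.not_ge) f
        exact tendsto_const_nhds.congr' (this.mono fun T h => h.symm)
    simpa using main
  refine key.congr' ?_
  filter_upwards [eventually_ge_atTop (0:ℝ)] with T hT
  rw [setIntegral_indicator measurableSet_Ici, Set.Ici_inter_Ici, max_eq_right hT]

/-- If ℓx + λc < ρ(I − k) throughout the state space, then for every
stopping time τ, E_x[−∫_τ^∞ e^{−ρt}(ℓX_t + λc) dt + e^{−ρτ}(I − k)] ≥ 0, and the infimum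
0 is attained in the limit τ → ∞; hence 𝒰(x) = 0 and it is never optimal to switch.
(On {τ = ∞} the payoff is 0, in accordance with the convention of the paper.) -/
theorem stmt_16 {Ω : Type*} {m : MeasurableSpace Ω} {μ : Measure Ω} [IsProbabilityMeasure μ]
    (ℱ : Filtration ℝ≥0∞ m) (X : ℝ → Ω → ℝ)
    (ρ ℓ lam c Inv k : ℝ)
    (hρ : 0 < ρ) (hℓ : 0 < ℓ) (hlam : 0 ≤ lam) (hc : 0 ≤ c)
    (hk : 0 < k) (hkI : k < Inv)
    (hmeas : Measurable (Function.uncurry X))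
    (hstate : ∀ t : ℝ, 0 ≤ t → ∀ ω, ℓ * X t ω + lam * c < ρ * (Inv - k))
    (hptint : ∀ ω, IntegrableOn (fun t => Real.exp (-ρ * t) * (ℓ * X t ω + lam * c))
      (Set.Ici 0))
    (hexpint : Integrable (fun ω =>
      ∫ t in Set.Ici (0 : ℝ), Real.exp (-ρ * t) * |ℓ * X t ω + lam * c|) μ) :
    (∀ τ : Ω → ℝ≥0∞, IsStoppingTime ℱ (fun ω => (τ ω : WithTop ℝ≥0∞)) →
      Integrable (fun ω =>
        -(∫ t in {t : ℝ | 0 ≤ t ∧ τ ω ≤ ENNReal.ofReal t},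
            Real.exp (-ρ * t) * (ℓ * X t ω + lam * c))
          + (if τ ω = ⊤ then 0 else Real.exp (-ρ * (τ ω).toReal) * (Inv - k))) μ →
      0 ≤ ∫ ω,
        (-(∫ t in {t : ℝ | 0 ≤ t ∧ τ ω ≤ ENNReal.ofReal t},
            Real.exp (-ρ * t) * (ℓ * X t ω + lam * c))
          + (if τ ω = ⊤ then 0 else Real.exp (-ρ * (τ ω).toReal) * (Inv - k))) ∂μ)
    ∧ Tendsto (fun T : ℝ => ∫ ω,
        (-(∫ t in {t : ℝ | 0 ≤ t ∧ ENNReal.ofReal T ≤ ENNReal.ofReal t},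
            Real.exp (-ρ * t) * (ℓ * X t ω + lam * c))
          + Real.exp (-ρ * T) * (Inv - k)) ∂μ) atTop (𝓝 0) := by
  constructor
  · -- Part 1: pointwise nonnegativity of the payoff, integrate.
    intro τ _ _
    refine integral_nonneg fun ω => ?_
    simp only [Pi.zero_apply]
    by_cases h : τ ω = ⊤
    · have hS : {t : ℝ | 0 ≤ t ∧ τ ω ≤ ENNReal.ofReal t} = ∅ := by
        ext t; simp [h, top_le_iff, ENNReal.ofReal_ne_top]
      simp [hS, h]
    · set a := (τ ω).toReal with ha_def
      have ha : 0 ≤ a := ENNReal.toReal_nonneg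
      have hS : {t : ℝ | 0 ≤ t ∧ τ ω ≤ ENNReal.ofReal t} = Set.Ici a := by
        ext t
        simp only [Set.mem_setOf_eq, Set.mem_Ici]
        constructor
        · rintro ⟨ht0, ht⟩; exact (ENNReal.le_ofReal_iff_toReal_le h ht0).mp ht
        · intro hta
          have ht0 : 0 ≤ t := le_trans ha hta
          exact ⟨ht0, (ENNReal.le_ofReal_iff_toReal_le h ht0).mpr hta⟩
      rw [hS, if_neg h]
      have hle : ∫ t in Set.Ici a, Real.exp (-ρ * t) * (ℓ * X t ω + lam * c) ≤
          Real.exp (-ρ * a) * (Inv - k) := by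
        refine tail_le ρ (Inv - k) a hρ _ ((hptint ω).mono_set fun t ht => le_trans ha ht) ?_
        intro t ht
        have ht0 : 0 ≤ t := le_trans ha ht
        have := (hstate t ht0 ω).le
        have hexp : 0 ≤ Real.exp (-ρ * t) := (Real.exp_pos _).le
        nlinarith [Real.exp_pos (-ρ * t)]
      linarith
  · -- Part 2: the payoff at deterministic time T tends to 0.
    have hset : ∀ T : ℝ, 0 ≤ T →
        {t : ℝ | 0 ≤ t ∧ ENNReal.ofReal T ≤ ENNReal.ofReal t} = Set.Ici T := by
      intro T hT
      ext t
      simp only [Set.mem_setOf_eq, Set.mem_Ici]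
      constructor
      · rintro ⟨ht0, ht⟩; exact (ENNReal.ofReal_le_ofReal_iff ht0).mp ht
      · intro htT; exact ⟨le_trans hT htT, ENNReal.ofReal_le_ofReal htT⟩
    have key : Tendsto (fun T : ℝ => ∫ ω,
        (-(∫ t in Set.Ici T, Real.exp (-ρ * t) * (ℓ * X t ω + lam * c))
          + Real.exp (-ρ * T) * (Inv - k)) ∂μ) atTop (𝓝 0) := by
      have h0 : (0:ℝ) = ∫ _ : Ω, (0:ℝ) ∂μ := by simp
      rw [h0]
      apply tendsto_integral_filter_of_dominated_convergence
        (fun ω => (∫ t in Set.Ici (0:ℝ), Real.exp (-ρ * t) * |ℓ * X t ω + lam * c|)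
          + |Inv - k|)
      · -- measurability
        refine Eventually.of_forall fun T => ?_
        have hsm : StronglyMeasurable fun p : Ω × ℝ =>
            Real.exp (-ρ * p.2) * (ℓ * X p.2 p.1 + lam * c) := by
          apply Measurable.stronglyMeasurable
          have hX : Measurable fun p : Ω × ℝ => X p.2 p.1 :=
            hmeas.comp measurable_swap
          fun_prop
        have := hsm.integral_prod_right' (ν := volume.restrict (Set.Ici T))
        exact ((this.neg.add_const (Real.exp (-ρ * T) * (Inv - k))).aestronglyMeasurable)
      · -- domination
        filter_upwards [eventually_ge_atTop (0:ℝ)] with T hT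
        refine ae_of_all _ fun ω => ?_
        have h1 : |∫ t in Set.Ici T, Real.exp (-ρ * t) * (ℓ * X t ω + lam * c)| ≤
            ∫ t in Set.Ici (0:ℝ), Real.exp (-ρ * t) * |ℓ * X t ω + lam * c| := by
          have hni := norm_integral_le_integral_norm (μ := volume.restrict (Set.Ici T))
            (fun t => Real.exp (-ρ * t) * (ℓ * X t ω + lam * c))
          simp only [Real.norm_eq_abs] at hni
          refine le_trans hni ?_
          have heq : ∀ t : ℝ, |Real.exp (-ρ * t) * (ℓ * X t ω + lam * c)| =
              Real.exp (-ρ * t) * |ℓ * X t ω + lam * c| := fun t => by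
            rw [abs_mul, abs_of_pos (Real.exp_pos _)]
          simp_rw [heq]
          apply setIntegral_mono_set
          · have habs := (hptint ω).abs
            have hfe : (fun t => |Real.exp (-ρ * t) * (ℓ * X t ω + lam * c)|) =
                fun t => Real.exp (-ρ * t) * |ℓ * X t ω + lam * c| := funext heq
            rwa [hfe] at habs
          · exact ae_of_all _ fun t => mul_nonneg (Real.exp_pos _).le (abs_nonneg _)
          · exact HasSubset.Subset.eventuallyLE (Set.Ici_subset_Ici.mpr hT)
        have h2 : |Real.exp (-ρ * T) * (Inv - k)| ≤ |Inv - k| := by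
          rw [abs_mul, abs_of_pos (Real.exp_pos _)]
          have : Real.exp (-ρ * T) ≤ 1 := by
            rw [Real.exp_le_one_iff]
            nlinarith
          nlinarith [abs_nonneg (Inv - k)]
        have habs := abs_add_le (-(∫ t in Set.Ici T, Real.exp (-ρ * t) * (ℓ * X t ω + lam * c)))
          (Real.exp (-ρ * T) * (Inv - k))
        rw [abs_neg] at habs
        calc ‖-(∫ t in Set.Ici T, Real.exp (-ρ * t) * (ℓ * X t ω + lam * c))
              + Real.exp (-ρ * T) * (Inv - k)‖
            ≤ |∫ t in Set.Ici T, Real.exp (-ρ * t) * (ℓ * X t ω + lam * c)|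
              + |Real.exp (-ρ * T) * (Inv - k)| := habs
          _ ≤ _ := add_le_add h1 h2
      · -- bound integrable
        exact hexpint.add (integrable_const _)
      · -- pointwise limit
        refine ae_of_all _ fun ω => ?_
        have hA : Tendsto (fun T : ℝ =>
            -(∫ t in Set.Ici T, Real.exp (-ρ * t) * (ℓ * X t ω + lam * c))) atTop (𝓝 0) := by
          simpa using (tail_tendsto _ (hptint ω)).neg
        have hB : Tendsto (fun T : ℝ => Real.exp (-ρ * T) * (Inv - k)) atTop (𝓝 0) := by
          have h0 : Tendsto (fun T : ℝ => -ρ * T) atTop atBot :=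
            tendsto_id.const_mul_atTop_of_neg (neg_neg_iff_pos.mpr hρ)
          simpa using (Real.tendsto_exp_atBot.comp h0).mul_const (Inv - k)
        simpa using hA.add hB
    refine key.congr' ?_
    filter_upwards [eventually_ge_atTop (0:ℝ)] with T hT
    rw [hset T hT]
end

section
/- Let ψ: ℝ → (0,∞) be strictly increasing, strictly convex and C², β ∈ ℝ, γ > 0, and let x* > β solve (x* − β)ψ'(x*) = ψ(x*). Then for all x < x*: −γ(x* − β)·ψ(x)/ψ(x*) ≤ −γ(x − β). Equivalently, the continuation-region value Û(x) = C ψ(x) lies below the stopping cost I − k − V̂(x) = −γ(x − β) on (−∞, x*). -/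
/-- For ψ > 0 strictly increasing, strictly convex, C², γ > 0 and x* > β
solving (x* − β)ψ'(x*) = ψ(x*), for all x < x* one has
−γ(x* − β)ψ(x)/ψ(x*) ≤ −γ(x − β): the continuation value lies below the stopping cost. -/
theorem stmt_18 (β γ xstar : ℝ) (ψ ψ' ψ'' : ℝ → ℝ)
    (hψpos : ∀ x, 0 < ψ x)
    (hmono : StrictMono ψ)
    (hd1 : ∀ x, HasDerivAt ψ (ψ' x) x)
    (hd2 : ∀ x, HasDerivAt ψ' (ψ'' x) x)
    (hconv : ∀ x, 0 < ψ'' x)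
    (hγ : 0 < γ) (hx : β < xstar)
    (hfit : (xstar - β) * ψ' xstar = ψ xstar) :
    ∀ x < xstar, -γ * (xstar - β) * (ψ x / ψ xstar) ≤ -γ * (x - β) := by
  intro x hxlt
  have hψs := hψpos xstar
  have hψx := hψpos x
  -- key inequality: (x - β) * ψ xstar ≤ (xstar - β) * ψ x
  have key : (x - β) * ψ xstar ≤ (xstar - β) * ψ x := by
    rcases le_or_gt x β with hxβ | hβx
    · nlinarith [mul_pos (sub_pos.mpr hx) hψx, mul_nonpos_of_nonpos_of_nonneg
        (sub_nonpos.mpr hxβ) hψs.le]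
    · -- A := fun y => (y - β) * ψ' y - ψ y is monotone on [β, xstar], A xstar = 0
      set A : ℝ → ℝ := fun y => (y - β) * ψ' y - ψ y with hA
      have hdA : ∀ y, HasDerivAt A ((y - β) * ψ'' y) y := by
        intro y
        have h : HasDerivAt A (1 * ψ' y + (id y - β) * ψ'' y - ψ' y) y := (((hasDerivAt_id y).sub_const β).mul (hd2 y)).sub (hd1 y)
        convert h using 1
        simp only [id]
        ring
      have hAmono : MonotoneOn A (Set.Icc β xstar) := by
        apply monotoneOn_of_deriv_nonneg (convex_Icc _ _)
        · exact fun y _ => ((hdA y).differentiableAt.continuousAt).continuousWithinAt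
        · intro y hy
          exact ((hdA y).differentiableAt).differentiableWithinAt
        · intro y hy
          rw [(hdA y).deriv]
          rw [interior_Icc] at hy
          exact mul_nonneg (by linarith [hy.1]) (hconv y).le
      have hAx : A xstar = 0 := by simp [hA]; linarith [hfit]
      have hAle : ∀ y ∈ Set.Icc β xstar, A y ≤ 0 := by
        intro y hy
        calc A y ≤ A xstar := hAmono hy (Set.right_mem_Icc.mpr hx.le) hy.2
        _ = 0 := hAx
      -- g := fun y => (y - β) / ψ y is monotone on [β, xstar]
      have hdg : ∀ y, HasDerivAt (fun y => (y - β) / ψ y)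
          ((1 * ψ y - (y - β) * ψ' y) / (ψ y)^2) y := fun y =>
        ((hasDerivAt_id y).sub_const β).div (hd1 y) (hψpos y).ne'
      have hgmono : MonotoneOn (fun y => (y - β) / ψ y) (Set.Icc β xstar) := by
        apply monotoneOn_of_deriv_nonneg (convex_Icc _ _)
        · exact fun y _ => ((hdg y).differentiableAt.continuousAt).continuousWithinAt
        · intro y hy
          exact ((hdg y).differentiableAt).differentiableWithinAt
        · intro y hy
          rw [(hdg y).deriv]
          rw [interior_Icc] at hy
          have := hAle y (Set.mem_Icc.mpr ⟨hy.1.le, hy.2.le⟩)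
          have h2 : (0:ℝ) < (ψ y)^2 := pow_pos (hψpos y) 2
          apply div_nonneg _ h2.le
          simp only [hA] at this
          nlinarith
      have := hgmono (Set.mem_Icc.mpr ⟨hβx.le, hxlt.le⟩)
        (Set.right_mem_Icc.mpr hx.le) hxlt.le
      rw [div_le_div_iff₀ hψx hψs] at this
      linarith
  have h2 : x - β ≤ (xstar - β) * (ψ x / ψ xstar) := by
    rw [mul_div_assoc', le_div_iff₀ hψs]
    linarith
  nlinarith
end
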